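/- Boundary vanishing of the unbranched envelope: with Λ the open unit ball, g continuous nonnegative with compact support in Λ, g* > sup g, and H₁ the class of M-Lipschitz truncated harmonic patches with M ≥ g*/dist(supp g, ∂Λ), the envelope w₁(x) = inf{h(x) : h ∈ H₁, h ≥ g} satisfies w₁(x) = 0 for every x ∈ ∂Λ. -/

import Mathlib

open scoped Classical

open Metric
open scoped RealInnerProductSpace

/-- The truncated affine harmonic `h_{v,z,c}(u) = (c − u·v)/z` where this is `≤ g*`,
and `+∞` otherwise. -/
noncomputable def affinePatch {d : ℕ} (gstar : ℝ) (v : EuclideanSpace ℝ (Fin d))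
    (z c : ℝ) : EuclideanSpace ℝ (Fin d) → EReal := fun u =>
  if (c - ⟪u, v⟫) / z ≤ gstar then (((c - ⟪u, v⟫) / z : ℝ) : EReal) else ⊤

/-- boundary vanishing of the unbranched envelope: `w₁ = 0` on `∂Λ`. -/
theorem unbranched_envelope_boundary_vanishing {d : ℕ} (hd : 2 ≤ d)
    (g : EuclideanSpace ℝ (Fin d) → ℝ)
    (hgc : Continuous g) (hg0 : ∀ u, 0 ≤ g u)
    (hsupp : IsCompact (tsupport g))
    (hsuppΛ : tsupport g ⊆ ball (0 : EuclideanSpace ℝ (Fin d)) 1)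
    (δ : ℝ) (hδpos : 0 < δ)
    (hδ : ∀ u ∈ tsupport g, ∀ v ∈ sphere (0 : EuclideanSpace ℝ (Fin d)) 1, δ ≤ dist u v)
    (gstar : ℝ) (hgs : ∀ u, g u < gstar)
    (M : ℝ) (hM : gstar / δ ≤ M)
    -- the class H₁ of M-Lipschitz truncated harmonic patches contains the
    -- nonnegative M-Lipschitz truncated affine harmonics
    (H₁ : Set (EuclideanSpace ℝ (Fin d) → EReal))
    (haff : ∀ (v : EuclideanSpace ℝ (Fin d)) (z c : ℝ), 0 < z →
      (∀ u ∈ ball (0 : EuclideanSpace ℝ (Fin d)) 1, 0 ≤ (c - ⟪u, v⟫) / z) →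
      ‖v‖ / z ≤ M → affinePatch gstar v z c ∈ H₁)
    -- the unbranched envelope
    (w₁ : EuclideanSpace ℝ (Fin d) → EReal)
    (hw₁ : ∀ x, w₁ x = ⨅ h ∈ {h ∈ H₁ |
      ∀ u ∈ closure (ball (0 : EuclideanSpace ℝ (Fin d)) 1), (g u : EReal) ≤ h u}, h x) :
    ∀ x ∈ sphere (0 : EuclideanSpace ℝ (Fin d)) 1, w₁ x = 0 := by
  intro x hx
  have hx1 : ‖x‖ = 1 := by simpa using hx
  have hgs0 : 0 < gstar := lt_of_le_of_lt (hg0 0) (hgs 0)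
  set z : ℝ := δ / gstar with hz
  have hzpos : 0 < z := div_pos hδpos hgs0
  have hzδ : gstar * z = δ := by rw [hz]; field_simp
  -- any point of the support has norm ≤ 1 - δ
  have hsmall : ∀ u ∈ tsupport g, ‖u‖ ≤ 1 - δ := by
    intro u hu
    by_cases h0 : u = 0
    · have hd0 : 0 < d := lt_of_lt_of_le (by norm_num) hd
      have he : (EuclideanSpace.single (⟨0, hd0⟩ : Fin d) (1 : ℝ)) ∈
          sphere (0 : EuclideanSpace ℝ (Fin d)) 1 := by
        simp [EuclideanSpace.norm_single]
      have := hδ u hu _ he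
      rw [h0] at this ⊢
      simp only [dist_eq_norm, zero_sub, norm_neg] at this
      rw [EuclideanSpace.norm_single, norm_one] at this
      simp only [norm_zero]
      linarith
    · have hne : ‖u‖ ≠ 0 := norm_ne_zero_iff.mpr h0
      have hupos : 0 < ‖u‖ := norm_pos_iff.mpr h0
      have hub : ‖u‖ < 1 := by simpa using hsuppΛ hu
      have hv : (‖u‖⁻¹ • u) ∈ sphere (0 : EuclideanSpace ℝ (Fin d)) 1 := by
        simp [norm_smul, abs_of_pos (inv_pos.mpr hupos), inv_mul_cancel₀ hne]
      have := hδ u hu _ hv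
      have hdist : dist u (‖u‖⁻¹ • u) = 1 - ‖u‖ := by
        rw [dist_eq_norm]
        have : u - ‖u‖⁻¹ • u = (1 - ‖u‖⁻¹) • u := by
          rw [sub_smul, one_smul]
        have h1inv : (1:ℝ) ≤ ‖u‖⁻¹ := one_le_inv_iff₀.mpr ⟨hupos, hub.le⟩
        rw [this, norm_smul, Real.norm_eq_abs, abs_of_nonpos (by linarith)]
        field_simp
        ring
      rw [hdist] at this
      linarith
  -- the barrier dominates g on the closed ball
  have hdom : ∀ u ∈ closure (ball (0 : EuclideanSpace ℝ (Fin d)) 1),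
      (g u : EReal) ≤ affinePatch gstar x z 1 u := by
    intro u hu
    have hucb : u ∈ closedBall (0 : EuclideanSpace ℝ (Fin d)) 1 := by
      rwa [closure_ball (0 : EuclideanSpace ℝ (Fin d)) one_ne_zero] at hu
    have hun : ‖u‖ ≤ 1 := by simpa using hucb
    unfold affinePatch
    split_ifs with hif
    · rw [EReal.coe_le_coe_iff]
      by_cases hts : u ∈ tsupport g
      · have hd1 : δ ≤ dist u x := hδ u hts x hx
        have hdsq : dist u x ^ 2 = ‖u‖ ^ 2 - 2 * ⟪u, x⟫ + ‖x‖ ^ 2 := by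
          rw [dist_eq_norm]
          exact norm_sub_sq_real u x
        have hsm : ‖u‖ ≤ 1 - δ := hsmall u hts
        have h1 : δ ≤ 1 - ⟪u, x⟫ := by nlinarith [norm_nonneg u, dist_nonneg (x := u) (y := x)]
        have h2 : gstar ≤ (1 - ⟪u, x⟫) / z := by
          rw [le_div_iff₀ hzpos]
          linarith
        linarith [hgs u]
      · have hgu : g u = 0 := image_eq_zero_of_notMem_tsupport hts
        rw [hgu]
        apply div_nonneg _ hzpos.le
        nlinarith [real_inner_le_norm u x]
    · exact le_top
  -- nonnegativity on the open ball
  have hnonneg : ∀ u ∈ ball (0 : EuclideanSpace ℝ (Fin d)) 1, 0 ≤ (1 - ⟪u, x⟫) / z := by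
    intro u hu
    have hun : ‖u‖ < 1 := by simpa using hu
    apply div_nonneg _ hzpos.le
    nlinarith [real_inner_le_norm u x]
  have hslope : ‖x‖ / z ≤ M := by
    rw [hx1, hz, one_div_div]
    exact hM
  have hmem := haff x z 1 hzpos hnonneg hslope
  -- value of barrier at x
  have hxval : affinePatch gstar x z 1 x = 0 := by
    unfold affinePatch
    have hxx : (1 : ℝ) - ⟪x, x⟫ = 0 := by
      rw [real_inner_self_eq_norm_sq, hx1]; ring
    rw [hxx, zero_div]
    simp [hgs0.le]
  rw [hw₁]
  apply le_antisymm
  · have := iInf₂_le (f := fun h (_ : h ∈ {h ∈ H₁ |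
        ∀ u ∈ closure (ball (0 : EuclideanSpace ℝ (Fin d)) 1), (g u : EReal) ≤ h u}) => h x)
      (affinePatch gstar x z 1) ⟨hmem, hdom⟩
    rw [hxval] at this
    exact this
  · refine le_iInf₂ fun h hh => ?_
    have hxcb : x ∈ closure (ball (0 : EuclideanSpace ℝ (Fin d)) 1) := by
      rw [closure_ball (0 : EuclideanSpace ℝ (Fin d)) one_ne_zero]
      simp [hx1]
    calc (0 : EReal) ≤ (g x : EReal) := by exact_mod_cast hg0 x
      _ ≤ h x := hh.2 x hxcb
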